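/- arXiv:2009.13168 — 2 statements merged into one kernel-verified Lean document; each statement's English description precedes it below -/
import Mathlib

section
/- (Bottom shift S₊) Let ψ = d+e-a-b-c-1 and η = (abc + ψdf)/(d(d-a-b-c) + ab+ac+bc + ψf). For parameters ensuring convergence and f,d,ψ,η ≠ 0, one has ₄F₃(a,b,c,f+1; d,e,f; 1) = [(abc + ψdf)/(ψdf)] · ₄F₃(a,b,c,η+1; d+1,e,η; 1). -/
open Complex

/-- Pochhammer (rising factorial) symbol. -/
noncomputable def poch (a : ℂ) (n : ℕ) : ℂ := ∏ i ∈ Finset.range n, (a + i)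

/-- General term of the ₃F₂ series at unit argument. -/
noncomputable def term32 (a b c d e : ℂ) (n : ℕ) : ℂ :=
  (poch a n * poch b n * poch c n) / ((n.factorial : ℂ) * poch d n * poch e n)

/-- ₃F₂ at unit argument. -/
noncomputable def hyp32 (a b c d e : ℂ) : ℂ := ∑' n : ℕ, term32 a b c d e n

/-- General term of the ₄F₃ series at unit argument. -/
noncomputable def term43 (a₁ a₂ a₃ a₄ b₁ b₂ b₃ : ℂ) (n : ℕ) : ℂ :=
  (poch a₁ n * poch a₂ n * poch a₃ n * poch a₄ n) /
    ((n.factorial : ℂ) * poch b₁ n * poch b₂ n * poch b₃ n)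

/-- ₄F₃ at unit argument. -/
noncomputable def hyp43 (a₁ a₂ a₃ a₄ b₁ b₂ b₃ : ℂ) : ℂ := ∑' n : ℕ, term43 a₁ a₂ a₃ a₄ b₁ b₂ b₃ n

/-- `x` is not a nonpositive integer (equivalently, not a pole of `Γ`). -/
def notNonposInt (x : ℂ) : Prop := ∀ n : ℕ, x ≠ -(n : ℂ)

open Filter Topology

lemma poch_succ (x : ℂ) (n : ℕ) : poch x (n+1) = poch x n * (x + n) :=
  Finset.prod_range_succ _ _

lemma poch_shift (x : ℂ) (n : ℕ) : x * poch (x+1) n = poch x n * (x + n) := by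
  induction n with
  | zero => simp [poch]
  | succ n ih =>
    rw [poch_succ, poch_succ, ← mul_assoc, ih]
    push_cast
    ring

lemma poch_ne_zero {x : ℂ} (h : notNonposInt x) (n : ℕ) : poch x n ≠ 0 := by
  apply Finset.prod_ne_zero_iff.2
  intro i _ hxi
  exact h i (by linear_combination hxi)

lemma add_nat_ne_zero {x : ℂ} (h : notNonposInt x) (n : ℕ) : x + n ≠ 0 := by
  intro hxi
  exact h n (by linear_combination hxi)

lemma term43_left (a b c d e f : ℂ) (hf : f ≠ 0) (hfp : notNonposInt f)
    (hd : notNonposInt d) (he : notNonposInt e) (n : ℕ) :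
    term43 a b c (f+1) d e f n = term32 a b c d e n * ((f + n) / f) := by
  have hfac : ((n.factorial : ℂ)) ≠ 0 := Nat.cast_ne_zero.mpr n.factorial_ne_zero
  have hfn : f + (n:ℂ) ≠ 0 := add_nat_ne_zero hfp n
  rw [term43, term32, div_mul_div_comm, div_eq_div_iff
    (by exact mul_ne_zero (mul_ne_zero (mul_ne_zero hfac (poch_ne_zero hd n)) (poch_ne_zero he n)) (poch_ne_zero hfp n))
    (by exact mul_ne_zero (mul_ne_zero (mul_ne_zero hfac (poch_ne_zero hd n)) (poch_ne_zero he n)) hf)]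
  linear_combination (poch a n * poch b n * poch c n * (n.factorial : ℂ) * poch d n * poch e n) * poch_shift f n

lemma term43_right (a b c d e η : ℂ) (hη0 : η ≠ 0)
    (hd : notNonposInt d) (he : notNonposInt e) (hd1 : notNonposInt (d+1))
    (hηp : notNonposInt η) (n : ℕ) :
    term43 a b c (η+1) (d+1) e η n
      = term32 a b c d e n * (d * (η + n) / ((d + n) * η)) := by
  have hfac : ((n.factorial : ℂ)) ≠ 0 := Nat.cast_ne_zero.mpr n.factorial_ne_zero
  have hdn : d + (n:ℂ) ≠ 0 := add_nat_ne_zero hd n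
  rw [term43, term32, div_mul_div_comm, div_eq_div_iff
    (by exact mul_ne_zero (mul_ne_zero (mul_ne_zero hfac (poch_ne_zero hd1 n)) (poch_ne_zero he n)) (poch_ne_zero hηp n))
    (by exact mul_ne_zero (mul_ne_zero (mul_ne_zero hfac (poch_ne_zero hd n)) (poch_ne_zero he n)) (mul_ne_zero hdn hη0))]
  linear_combination (poch a n * poch b n * poch c n * (n.factorial : ℂ) * poch e n * poch d n * (d + (n:ℂ))) * poch_shift η n - (poch a n * poch b n * poch c n * (n.factorial : ℂ) * poch e n * (η + (n:ℂ)) * poch η n) * poch_shift d n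

lemma term32_ratio (a b c d e : ℂ) (hd : notNonposInt d) (he : notNonposInt e) (n : ℕ) :
    term32 a b c d e (n+1)
      = term32 a b c d e n *
        ((a + n) * (b + n) * (c + n) / (((n:ℂ) + 1) * (d + n) * (e + n))) := by
  have hfac : ((n.factorial : ℂ)) ≠ 0 := Nat.cast_ne_zero.mpr n.factorial_ne_zero
  have hdn : d + (n:ℂ) ≠ 0 := add_nat_ne_zero hd n
  have hen : e + (n:ℂ) ≠ 0 := add_nat_ne_zero he n
  have hn1 : ((n:ℂ) + 1) ≠ 0 := by
    have : ((n + 1 : ℕ) : ℂ) ≠ 0 := Nat.cast_ne_zero.mpr n.succ_ne_zero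
    push_cast at this; exact this
  have hA : ((n:ℂ) + 1) * (n.factorial : ℂ) * (poch d n * (d + (n:ℂ))) * (poch e n * (e + (n:ℂ))) ≠ 0 :=
    mul_ne_zero (mul_ne_zero (mul_ne_zero hn1 hfac)
      (mul_ne_zero (poch_ne_zero hd n) hdn)) (mul_ne_zero (poch_ne_zero he n) hen)
  have hB : (n.factorial : ℂ) * poch d n * poch e n * (((n:ℂ) + 1) * (d + (n:ℂ)) * (e + (n:ℂ))) ≠ 0 :=
    mul_ne_zero (mul_ne_zero (mul_ne_zero hfac (poch_ne_zero hd n)) (poch_ne_zero he n))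
      (mul_ne_zero (mul_ne_zero hn1 hdn) hen)
  rw [term32, term32, poch_succ, poch_succ, poch_succ, poch_succ, poch_succ,
    Nat.factorial_succ]
  push_cast
  rw [div_mul_div_comm, div_eq_div_iff hA hB]
  ring

lemma scalar_id (a b c d e f η x : ℂ)
    (hden : d * (d - a - b - c) + a * b + a * c + b * c + (d + e - a - b - c - 1) * f ≠ 0)
    (hη : η = (a * b * c + (d + e - a - b - c - 1) * d * f) /
      (d * (d - a - b - c) + a * b + a * c + b * c + (d + e - a - b - c - 1) * f))
    (hf : f ≠ 0) (hd0 : d ≠ 0) (hψ0 : d + e - a - b - c - 1 ≠ 0) (hη0 : η ≠ 0)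
    (hx1 : x + 1 ≠ 0) (hdx : d + x ≠ 0) (hex : e + x ≠ 0) :
    (f + x) / f
      - ((a * b * c + (d + e - a - b - c - 1) * d * f) / ((d + e - a - b - c - 1) * d * f))
          * (d * (η + x) / ((d + x) * η))
    = x * (x + e - 1) / (f * (d + e - a - b - c - 1))
      - ((a + x) * (b + x) * (c + x) / ((x + 1) * (d + x) * (e + x)))
          * ((x + 1) * (x + e)) / (f * (d + e - a - b - c - 1)) := by
  have hrel : η * (d * (d - a - b - c) + a * b + a * c + b * c + (d + e - a - b - c - 1) * f)
      = a * b * c + (d + e - a - b - c - 1) * d * f := by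
    rw [hη, div_mul_cancel₀ _ hden]
  set ψ := d + e - a - b - c - 1 with hψdef
  set Z := f * ψ * (d + x) * (e + x) * (x + 1) * η with hZdef
  have hZ : Z ≠ 0 := by
    apply mul_ne_zero (mul_ne_zero (mul_ne_zero (mul_ne_zero (mul_ne_zero hf hψ0) hdx) hex) hx1) hη0
  have t1 : (f + x) / f = ((f + x) * (ψ * (d + x) * (e + x) * (x + 1) * η)) / Z := by
    rw [div_eq_div_iff hf hZ]; ring
  have t2 : ((a * b * c + ψ * d * f) / (ψ * d * f)) * (d * (η + x) / ((d + x) * η))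
      = ((a * b * c + ψ * d * f) * (η + x) * (e + x) * (x + 1)) / Z := by
    rw [div_mul_div_comm, div_eq_div_iff (by
      exact mul_ne_zero (mul_ne_zero (mul_ne_zero hψ0 hd0) hf) (mul_ne_zero hdx hη0)) hZ]
    ring
  have t3 : x * (x + e - 1) / (f * ψ)
      = (x * (x + e - 1) * ((d + x) * (e + x) * (x + 1) * η)) / Z := by
    rw [div_eq_div_iff (mul_ne_zero hf hψ0) hZ]; ring
  have t4 : ((a + x) * (b + x) * (c + x) / ((x + 1) * (d + x) * (e + x)))
          * ((x + 1) * (x + e)) / (f * ψ)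
      = ((a + x) * (b + x) * (c + x) * (x + e) * (x + 1) * η) / Z := by
    rw [div_mul_eq_mul_div, div_div, div_eq_div_iff (by
      exact mul_ne_zero (mul_ne_zero (mul_ne_zero hx1 hdx) hex) (mul_ne_zero hf hψ0)) hZ]
    ring
  rw [t1, t2, t3, t4, div_sub_div_same, div_sub_div_same]
  congr 1
  linear_combination (x * (e + x) * (x + 1)) * hrel

lemma key_identity (a b c d e f η : ℂ)
    (hden : d * (d - a - b - c) + a * b + a * c + b * c + (d + e - a - b - c - 1) * f ≠ 0)
    (hη : η = (a * b * c + (d + e - a - b - c - 1) * d * f) /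
      (d * (d - a - b - c) + a * b + a * c + b * c + (d + e - a - b - c - 1) * f))
    (hf : f ≠ 0) (hd0 : d ≠ 0) (hψ0 : d + e - a - b - c - 1 ≠ 0) (hη0 : η ≠ 0)
    (hd : notNonposInt d) (he : notNonposInt e) (hfp : notNonposInt f)
    (hd1 : notNonposInt (d + 1)) (hηp : notNonposInt η) (n : ℕ) :
    term43 a b c (f + 1) d e f n
      - ((a * b * c + (d + e - a - b - c - 1) * d * f) / ((d + e - a - b - c - 1) * d * f))
          * term43 a b c (η + 1) (d + 1) e η n
    = term32 a b c d e n * (n : ℂ) * ((n : ℂ) + e - 1) / (f * (d + e - a - b - c - 1))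
      - term32 a b c d e (n + 1) * ((n + 1 : ℕ) : ℂ) * (((n + 1 : ℕ) : ℂ) + e - 1)
          / (f * (d + e - a - b - c - 1)) := by
  have hn1 : ((n:ℂ) + 1) ≠ 0 := by
    have : ((n + 1 : ℕ) : ℂ) ≠ 0 := Nat.cast_ne_zero.mpr n.succ_ne_zero
    push_cast at this; exact this
  have hdn : d + (n:ℂ) ≠ 0 := add_nat_ne_zero hd n
  have hen : e + (n:ℂ) ≠ 0 := add_nat_ne_zero he n
  rw [term43_left a b c d e f hf hfp hd he n,
      term43_right a b c d e η hη0 hd he hd1 hηp n,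
      term32_ratio a b c d e hd he n]
  push_cast
  linear_combination (term32 a b c d e n) *
    scalar_id a b c d e f η (n:ℂ) hden hη hf hd0 hψ0 hη0 hn1 hdn hen


set_option maxHeartbeats 2000000 in
theorem stmt13 (a b c d e f : ℂ) (ψ η : ℂ)
    (hψ : ψ = d + e - a - b - c - 1)
    (hden : d * (d - a - b - c) + a * b + a * c + b * c + ψ * f ≠ 0)
    (hη : η = (a * b * c + ψ * d * f) / (d * (d - a - b - c) + a * b + a * c + b * c + ψ * f))
    (hf : f ≠ 0) (hd0 : d ≠ 0) (hψ0 : ψ ≠ 0) (hη0 : η ≠ 0)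
    (hconv : 0 < ψ.re)
    (hd : notNonposInt d) (he : notNonposInt e) (hfp : notNonposInt f)
    (hd1 : notNonposInt (d + 1)) (hηp : notNonposInt η)
    (h1 : Summable (term43 a b c (f + 1) d e f))
    (h2 : Summable (term43 a b c (η + 1) (d + 1) e η)) :
    hyp43 a b c (f + 1) d e f =
      ((a * b * c + ψ * d * f) / (ψ * d * f)) * hyp43 a b c (η + 1) (d + 1) e η := by
  subst hψ
  set ψ := d + e - a - b - c - 1 with hψdef
  set K := (a * b * c + ψ * d * f) / (ψ * d * f) with hK
  set Δ : ℕ → ℂ := fun n => term32 a b c d e n * (n : ℂ) * ((n : ℂ) + e - 1) / (f * ψ)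
    with hΔdef
  have key : ∀ n : ℕ, term43 a b c (f + 1) d e f n
      - K * term43 a b c (η + 1) (d + 1) e η n = Δ n - Δ (n + 1) := by
    intro n
    simp only [hΔdef]
    push_cast
    have := key_identity a b c d e f η hden hη hf hd0 hψ0 hη0 hd he hfp hd1 hηp n
    push_cast at this
    exact this
  have hS : HasSum (fun n => term43 a b c (f + 1) d e f n
      - K * term43 a b c (η + 1) (d + 1) e η n)
      ((∑' n, term43 a b c (f + 1) d e f n) - K * ∑' n, term43 a b c (η + 1) (d + 1) e η n) :=
    h1.hasSum.sub (h2.hasSum.mul_left K)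
  set S := (∑' n, term43 a b c (f + 1) d e f n)
    - K * ∑' n, term43 a b c (η + 1) (d + 1) e η n with hSdef
  have hpartial : ∀ N : ℕ, (∑ i ∈ Finset.range N, (term43 a b c (f + 1) d e f i
      - K * term43 a b c (η + 1) (d + 1) e η i)) = - Δ N := by
    intro N
    rw [Finset.sum_congr rfl (fun i _ => key i), Finset.sum_range_sub' Δ N]
    have : Δ 0 = 0 := by simp [hΔdef]
    rw [this, zero_sub]
  have htend : Tendsto (fun N => - Δ N) atTop (𝓝 S) := by
    have := hS.tendsto_sum_nat
    simpa only [hpartial] using this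
  have hΔtend : Tendsto Δ atTop (𝓝 (- S)) := by
    have := htend.neg
    simpa using this
  have hS0 : S = 0 := by
    by_contra hne
    have hl0 : -S ≠ 0 := neg_ne_zero.mpr hne
    set ε := ‖-S‖ / 2 with hεdef
    have hε : 0 < ε := by
      have : 0 < ‖-S‖ := norm_pos_iff.mpr hl0
      positivity
    have hεlt : ε < ‖-S‖ := by
      have : 0 < ‖-S‖ := norm_pos_iff.mpr hl0
      rw [hεdef]; linarith
    have hev1 : ∀ᶠ n in atTop, ε ≤ ‖Δ n‖ :=
      hΔtend.norm.eventually (eventually_ge_nhds hεlt)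
    have hev2 : ∀ᶠ (n : ℕ) in atTop,
        max (max (2 * ‖f‖) ‖e - 1‖) 1 ≤ (n : ℝ) :=
      (tendsto_natCast_atTop_atTop (R := ℝ)).eventually_ge_atTop _
    obtain ⟨N, hN⟩ := eventually_atTop.mp (hev1.and hev2)
    set P := ‖ψ‖ with hPdef
    have hP : 0 < P := norm_pos_iff.mpr hψ0
    have hEf : 0 < ‖f‖ := norm_pos_iff.mpr hf
    have hbound : ∀ n ≥ N, 1 / (n : ℝ) ≤ (4 / (ε * P)) * ‖term43 a b c (f + 1) d e f n‖ := by
      intro n hn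
      obtain ⟨h1n, h2n⟩ := hN n hn
      have hx1 : (1 : ℝ) ≤ (n : ℝ) := le_trans (le_max_right _ _) h2n
      have hx2f : 2 * ‖f‖ ≤ (n : ℝ) := le_trans (le_trans (le_max_left _ _) (le_max_left _ _)) h2n
      have hxE : ‖e - 1‖ ≤ (n : ℝ) := le_trans (le_trans (le_max_right _ _) (le_max_left _ _)) h2n
      have hx0 : (0 : ℝ) < (n : ℝ) := lt_of_lt_of_le one_pos hx1
      set T0 := ‖term32 a b c d e n‖ with hT0def
      have hT0 : 0 ≤ T0 := norm_nonneg _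
      set B := ‖(n : ℂ) + e - 1‖ with hBdef
      set Fn := ‖f + (n : ℂ)‖ with hFndef
      have hFn0 : 0 ≤ Fn := norm_nonneg _
      have hΔnorm : ‖Δ n‖ = T0 * (n : ℝ) * B / (‖f‖ * P) := by
        rw [hΔdef]
        simp only [norm_div, norm_mul, Complex.norm_natCast]
        rfl
      have hLnorm : ‖term43 a b c (f + 1) d e f n‖ = T0 * Fn / ‖f‖ := by
        rw [term43_left a b c d e f hf hfp hd he n, norm_mul, norm_div, mul_div_assoc]
      have hBle : B ≤ (n : ℝ) + ‖e - 1‖ := by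
        have heq : ((n : ℂ) + e - 1) = (n : ℂ) + (e - 1) := by ring
        rw [hBdef, heq]
        calc ‖(n : ℂ) + (e - 1)‖ ≤ ‖(n : ℂ)‖ + ‖e - 1‖ := norm_add_le _ _
          _ = (n : ℝ) + ‖e - 1‖ := by rw [Complex.norm_natCast]
      have hflow : (n : ℝ) - ‖f‖ ≤ Fn := by
        have h := norm_sub_norm_le ((n : ℂ)) (-f)
        rw [norm_neg, sub_neg_eq_add, Complex.norm_natCast, add_comm] at h
        exact h
      have hεn : ε ≤ T0 * (n : ℝ) * B / (‖f‖ * P) := by rw [← hΔnorm]; exact h1n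
      have s1 : ε * (‖f‖ * P) ≤ T0 * (n : ℝ) * B := (le_div_iff₀ (by positivity)).mp hεn
      have hB2x : B ≤ 2 * (n : ℝ) := by linarith
      have s2 : ε * ‖f‖ * P ≤ 2 * T0 * (n : ℝ) ^ 2 := by nlinarith [mul_nonneg hT0 hx0.le]
      have hFn2 : (n : ℝ) / 2 ≤ Fn := by linarith
      rw [hLnorm, div_mul_div_comm, div_le_div_iff₀ hx0 (by positivity)]
      nlinarith [mul_nonneg hT0 hx0.le, mul_nonneg (mul_nonneg hT0 hx0.le) hx0.le]
    have hsum0 : Summable (fun n : ℕ => ‖term43 a b c (f + 1) d e f n‖) :=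
      summable_norm_iff.mpr h1
    have hsum : Summable (fun n : ℕ => (4 / (ε * P)) * ‖term43 a b c (f + 1) d e f n‖) :=
      hsum0.mul_left _
    have hshift : Summable (fun n : ℕ => (4 / (ε * P)) * ‖term43 a b c (f + 1) d e f (n + N)‖) :=
      (summable_nat_add_iff (f := fun m : ℕ => (4 / (ε * P)) * ‖term43 a b c (f + 1) d e f m‖) N).mpr hsum
    have hs3 : Summable (fun n : ℕ => 1 / ((n + N : ℕ) : ℝ)) :=
      Summable.of_nonneg_of_le (fun n => by positivity)
        (fun n => hbound (n + N) (Nat.le_add_left N n)) hshift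
    have hs4 : Summable (fun n : ℕ => 1 / (n : ℝ)) := (summable_nat_add_iff (f := fun m : ℕ => 1 / (m : ℝ)) N).mp hs3
    exact Real.not_summable_one_div_natCast hs4
  rw [hyp43, hyp43]
  exact sub_eq_zero.mp hS0
end

section
/- (Transformation of the log-derivative ratio) Suppose a transformation F(r,f) = M(r)·((εf+λ(r))/f)·F(Dr, η) with η = (εf+λ(r))/(α(r)f+β(r)) holds identically in f, where F(r,f) = ₄F₃(a,b,c,f+1; d,e,f; 1) for r = (a,b,c,d,e). Then the ratio Ψ(r) = F₂(r)/F₁(r), with F₁(r) = ₃F₂(a,b,c; d,e; 1) and F₂(r) = (abc/(de))·₃F₂(a+1,b+1,c+1; d+1,e+1; 1), satisfies Ψ(r) = (β(r)Ψ(Dr) + λ(r))/(α(r)Ψ(Dr) + ε). -/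
open Complex

theorem stmt17 (a b c d e a' b' c' d' e' M lam α' β' ε : ℂ)
    (hε : ε = 0 ∨ ε = 1)
    (F₁ F₂ F₁' F₂' : ℂ)
    (hF₁ : F₁ = hyp32 a b c d e)
    (hF₂ : F₂ = a * b * c / (d * e) * hyp32 (a + 1) (b + 1) (c + 1) (d + 1) (e + 1))
    (hF₁' : F₁' = hyp32 a' b' c' d' e')
    (hF₂' : F₂' = a' * b' * c' / (d' * e') *
      hyp32 (a' + 1) (b' + 1) (c' + 1) (d' + 1) (e' + 1))
    -- the decomposition F(r,f) = F₁(r) + F₂(r)/f holds for all f ≠ 0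
    (hdec : ∀ f : ℂ, f ≠ 0 → hyp43 a b c (f + 1) d e f = F₁ + F₂ / f)
    (hdec' : ∀ f : ℂ, f ≠ 0 → hyp43 a' b' c' (f + 1) d' e' f = F₁' + F₂' / f)
    (U : Set ℂ) (hUopen : IsOpen U) (hUne : U.Nonempty)
    (hU : ∀ f ∈ U, f ≠ 0 ∧ α' * f + β' ≠ 0 ∧ (ε * f + lam) / (α' * f + β') ≠ 0)
    -- the transformation F(r,f) = M·((εf+λ)/f)·F(Dr, η) holds on U
    (htrans : ∀ f ∈ U,
      hyp43 a b c (f + 1) d e f =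
        M * ((ε * f + lam) / f) *
          hyp43 a' b' c' ((ε * f + lam) / (α' * f + β') + 1) d' e'
            ((ε * f + lam) / (α' * f + β')))
    (hF₁0 : F₁ ≠ 0) (hF₁'0 : F₁' ≠ 0)
    (hden : α' * (F₂' / F₁') + ε ≠ 0) :
    F₂ / F₁ = (β' * (F₂' / F₁') + lam) / (α' * (F₂' / F₁') + ε) := by
  -- Step 1: linear relation in f on U
  have key : ∀ f ∈ U, F₁ * f + F₂ = M * (ε * F₁' + α' * F₂') * f + M * (lam * F₁' + β' * F₂') := by
    intro f hf
    obtain ⟨hf0, hαβ, hη⟩ := hU f hf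
    have hεl : ε * f + lam ≠ 0 := by
      intro h; apply hη; rw [h]; simp
    have h := htrans f hf
    rw [hdec f hf0, hdec' _ hη] at h
    field_simp at h
    apply mul_left_cancel₀ (mul_ne_zero hf0 hεl)
    have hεl' : f * ε + lam ≠ 0 := by rwa [mul_comm f ε]
    have e : (f * ε + lam) * (F₂' * (f * α' + β') / (f * ε + lam)) = F₂' * (f * α' + β') := by
      rw [mul_div_assoc']; exact mul_div_cancel_left₀ _ hεl'
    linear_combination (f * (ε * f + lam)) * h + (f * (ε * f + lam)) * M * e
  -- Step 2: two distinct points of U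
  obtain ⟨f₀, hf₀⟩ := hUne
  obtain ⟨r, hr, hball⟩ := Metric.isOpen_iff.mp hUopen f₀ hf₀
  have hf₁ : f₀ + (r : ℂ) / 2 ∈ U := by
    apply hball
    simp only [Metric.mem_ball, dist_eq]
    have : f₀ + (r : ℂ) / 2 - f₀ = ((r / 2 : ℝ) : ℂ) := by push_cast; ring
    rw [this, Complex.norm_real, Real.norm_eq_abs, abs_of_pos (by linarith)]
    linarith
  have h0 := key f₀ hf₀
  have h1 := key _ hf₁
  have hr0 : (r : ℂ) / 2 ≠ 0 := by
    simp only [ne_eq, div_eq_zero_iff]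
    push_neg
    exact ⟨by exact_mod_cast hr.ne', by norm_num⟩
  have hA : F₁ = M * (ε * F₁' + α' * F₂') := by
    have h2 : (F₁ - M * (ε * F₁' + α' * F₂')) * ((r : ℂ) / 2) = 0 := by
      linear_combination h1 - h0
    rcases mul_eq_zero.mp h2 with h | h
    · exact sub_eq_zero.mp h
    · exact absurd h hr0
  have hB : F₂ = M * (lam * F₁' + β' * F₂') := by
    linear_combination h0 - f₀ * hA
  -- Step 3: conclude
  have hden' : M * (ε * F₁' + α' * F₂') ≠ 0 := hA ▸ hF₁0
  have hM : M ≠ 0 := left_ne_zero_of_mul hden'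
  have hd2 : ε * F₁' + α' * F₂' ≠ 0 := right_ne_zero_of_mul hden'
  rw [hA, hB, mul_div_mul_left _ _ hM, div_eq_div_iff hd2 hden]
  field_simp
  ring
end
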